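/- In the two-period Stackelberg game, for every initial opinion p₀ ∈ [0,1] and state s₁, elite A's optimal period-1 choice lies in the four-point set {p₀, 1/2, 1/2 + Δ, 1/2 - Δ}: every other p₁ ∈ [0,1] is weakly dominated by one of these four points in the objective u_A(y(p₁), s₁) - c(p₁ - p₀) + β·Φ(p₁). -/
import Mathlib


/-- Elite A's period-1 objective: current payoff `u_A(y(p₁), s₁)` (with the tie at
`p₁ = 1/2` broken in A's favor), minus the persuasion cost from `p₀`, plus the discounted
continuation value `Φ(p₁)` induced by B's best response. -/
noncomputable def Jobj (c : ℝ → ℝ) (H β pr Δ p₀ : ℝ) (s₁ : Bool) (p₁ : ℝ) : ℝ :=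
  (if (1 : ℝ) / 2 < p₁ then (if s₁ then H else 0)
    else if p₁ = 1 / 2 then H else (if s₁ then 0 else H))
  - c (p₁ - p₀)
  + β * (if p₁ ≤ 1 / 2 - Δ then (1 - pr) * H
          else if 1 / 2 + Δ ≤ p₁ then pr * H else 0)

/-- Elite A's optimal period-1 choice lies in the four-point set
`{p₀, 1/2, 1/2 + Δ, 1/2 - Δ}`: every other `p₁ ∈ [0,1]` is weakly dominated. -/
theorem four_point_candidate_set
    (c : ℝ → ℝ) (H β pr Δ : ℝ)
    (hc0 : c 0 = 0)
    (hceven : ∀ x, c (-x) = c x)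
    (hcmono : StrictMonoOn c (Set.Ici (0 : ℝ)))
    (hcconv : StrictConvexOn ℝ Set.univ c)
    (hH : 0 < H) (hβ : β ∈ Set.Ioo (0 : ℝ) 1) (hpr : pr ∈ Set.Ioo (0 : ℝ) 1)
    (hΔ : 0 < Δ) (hcΔ : c Δ = H) (hΔle : Δ ≤ 1 / 2)
    (p₀ : ℝ) (hp₀ : p₀ ∈ Set.Icc (0 : ℝ) 1) (s₁ : Bool) :
    ∀ p₁ ∈ Set.Icc (0 : ℝ) 1,
      ∃ q ∈ ({p₀, 1 / 2, 1 / 2 + Δ, 1 / 2 - Δ} : Set ℝ),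
        Jobj c H β pr Δ p₀ s₁ p₁ ≤ Jobj c H β pr Δ p₀ s₁ q := by
  obtain ⟨hβ0, hβ1⟩ := hβ
  obtain ⟨hpr0, hpr1⟩ := hpr
  obtain ⟨hp₀0, hp₀1⟩ := hp₀
  intro p₁ hp₁
  obtain ⟨hp₁0, hp₁1⟩ := hp₁
  have habs : ∀ x : ℝ, c x = c |x| := by
    intro x
    rcases abs_cases x with ⟨h, _⟩ | ⟨h, _⟩
    · rw [h]
    · rw [h, hceven]
  have hc_abs : ∀ a b : ℝ, |a| ≤ |b| → c a ≤ c b := by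
    intro a b hab
    rw [habs a, habs b]
    exact hcmono.monotoneOn (Set.mem_Ici.2 (abs_nonneg a)) (Set.mem_Ici.2 (abs_nonneg b)) hab
  have hc_nonneg : ∀ x : ℝ, 0 ≤ c x := by
    intro x
    have := hc_abs 0 x (by simpa using abs_nonneg x)
    simpa [hc0] using this
  have hb0 : (if s₁ then (0:ℝ) else H) ≤ H := by cases s₁ <;> simp [hH.le]
  have hb1 : (if s₁ then H else (0:ℝ)) ≤ H := by cases s₁ <;> simp [hH.le]
  have hpos1 : 0 ≤ β * ((1 - pr) * H) :=
    mul_nonneg hβ0.le (mul_nonneg (by linarith) hH.le)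
  have hpos2 : 0 ≤ β * (pr * H) := mul_nonneg hβ0.le (mul_nonneg hpr0.le hH.le)
  -- value of Jobj on each cell
  have e1 : ∀ x, x ≤ 1/2 - Δ →
      Jobj c H β pr Δ p₀ s₁ x = (if s₁ then (0:ℝ) else H) - c (x - p₀) + β * ((1-pr)*H) := by
    intro x hx
    have h1 : ¬ ((1:ℝ)/2 < x) := by intro h; linarith
    have h2 : x ≠ 1/2 := by intro h; rw [h] at hx; linarith
    simp only [Jobj]
    rw [if_neg h1, if_neg h2, if_pos hx]
  have e2 : ∀ x, 1/2 - Δ < x → x < 1/2 →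
      Jobj c H β pr Δ p₀ s₁ x = (if s₁ then (0:ℝ) else H) - c (x - p₀) := by
    intro x hxa hxb
    have h1 : ¬ ((1:ℝ)/2 < x) := not_lt.2 hxb.le
    have h2 : x ≠ 1/2 := hxb.ne
    have h3 : ¬ (x ≤ 1/2 - Δ) := not_le.2 hxa
    have h4 : ¬ ((1:ℝ)/2 + Δ ≤ x) := by intro h; linarith
    simp only [Jobj]
    rw [if_neg h1, if_neg h2, if_neg h3, if_neg h4]
    ring
  have e3 : Jobj c H β pr Δ p₀ s₁ (1/2) = H - c (1/2 - p₀) := by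
    have h1 : ¬ ((1:ℝ)/2 < 1/2) := lt_irrefl _
    have h2 : ((1:ℝ)/2) = 1/2 := rfl
    have h3 : ¬ ((1:ℝ)/2 ≤ 1/2 - Δ) := by intro h; linarith
    have h4 : ¬ ((1:ℝ)/2 + Δ ≤ 1/2) := by intro h; linarith
    simp only [Jobj]
    rw [if_neg h1, if_neg h3, if_neg h4, if_pos trivial]
    ring
  have e4 : ∀ x, 1/2 < x → x < 1/2 + Δ →
      Jobj c H β pr Δ p₀ s₁ x = (if s₁ then H else (0:ℝ)) - c (x - p₀) := by
    intro x hxa hxb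
    have h3 : ¬ (x ≤ 1/2 - Δ) := by intro h; linarith
    have h4 : ¬ ((1:ℝ)/2 + Δ ≤ x) := not_le.2 hxb
    simp only [Jobj]
    rw [if_pos hxa, if_neg h3, if_neg h4]
    ring
  have e5 : ∀ x, 1/2 + Δ ≤ x →
      Jobj c H β pr Δ p₀ s₁ x = (if s₁ then H else (0:ℝ)) - c (x - p₀) + β * (pr*H) := by
    intro x hx
    have hx2 : (1:ℝ)/2 < x := by linarith
    have h3 : ¬ (x ≤ 1/2 - Δ) := by intro h; linarith
    simp only [Jobj]
    rw [if_pos hx2, if_neg h3, if_pos hx]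
  by_cases h1 : p₁ ≤ 1/2 - Δ
  · by_cases hq : p₀ ≤ 1/2 - Δ
    · refine ⟨p₀, by simp, ?_⟩
      rw [e1 p₁ h1, e1 p₀ hq, sub_self, hc0]
      linarith [hc_nonneg (p₁ - p₀)]
    · push_neg at hq
      refine ⟨1/2 - Δ, by simp, ?_⟩
      rw [e1 p₁ h1, e1 (1/2 - Δ) le_rfl]
      have hcc : c (1/2 - Δ - p₀) ≤ c (p₁ - p₀) := by
        apply hc_abs
        rw [abs_of_nonpos (by linarith), abs_of_nonpos (by linarith)]
        linarith
      linarith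
  · push_neg at h1
    by_cases h2 : p₁ < 1/2
    · by_cases hq : p₀ < 1/2
      · refine ⟨p₀, by simp, ?_⟩
        rw [e2 p₁ h1 h2]
        by_cases hq2 : p₀ ≤ 1/2 - Δ
        · rw [e1 p₀ hq2, sub_self, hc0]
          linarith [hc_nonneg (p₁ - p₀)]
        · push_neg at hq2
          rw [e2 p₀ hq2 hq, sub_self, hc0]
          linarith [hc_nonneg (p₁ - p₀)]
      · push_neg at hq
        refine ⟨1/2, by simp, ?_⟩
        rw [e2 p₁ h1 h2, e3]
        have hcc : c (1/2 - p₀) ≤ c (p₁ - p₀) := by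
          apply hc_abs
          rw [abs_of_nonpos (by linarith), abs_of_nonpos (by linarith)]
          linarith
        linarith
    · push_neg at h2
      by_cases h3 : p₁ = 1/2
      · exact ⟨1/2, by simp, by rw [h3]⟩
      · have h3' : 1/2 < p₁ := lt_of_le_of_ne h2 (Ne.symm h3)
        by_cases h4 : p₁ < 1/2 + Δ
        · by_cases hq : 1/2 < p₀
          · refine ⟨p₀, by simp, ?_⟩
            rw [e4 p₁ h3' h4]
            by_cases hq2 : 1/2 + Δ ≤ p₀
            · rw [e5 p₀ hq2, sub_self, hc0]
              linarith [hc_nonneg (p₁ - p₀)]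
            · push_neg at hq2
              rw [e4 p₀ hq hq2, sub_self, hc0]
              linarith [hc_nonneg (p₁ - p₀)]
          · push_neg at hq
            refine ⟨1/2, by simp, ?_⟩
            rw [e4 p₁ h3' h4, e3]
            have hcc : c (1/2 - p₀) ≤ c (p₁ - p₀) := by
              apply hc_abs
              rw [abs_of_nonneg (by linarith), abs_of_nonneg (by linarith)]
              linarith
            linarith
        · push_neg at h4
          by_cases hq : p₀ < 1/2 + Δ
          · refine ⟨1/2 + Δ, by simp, ?_⟩
            rw [e5 p₁ h4, e5 (1/2 + Δ) le_rfl]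
            have hcc : c (1/2 + Δ - p₀) ≤ c (p₁ - p₀) := by
              apply hc_abs
              rw [abs_of_nonneg (by linarith), abs_of_nonneg (by linarith)]
              linarith
            linarith
          · push_neg at hq
            refine ⟨p₀, by simp, ?_⟩
            rw [e5 p₁ h4, e5 p₀ hq, sub_self, hc0]
            linarith [hc_nonneg (p₁ - p₀)]
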